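/- Let the reward be the forward-looking corrected reward r(s, s') = −E(s → s') + α log P_B(s|s') for edges with s' ∈ S and r(s, s_f) = 0. Then for every edge s → s' with s' ∈ S, the Soft Q-Learning residual equals −α times the Forward-Looking Detailed Balance residual: Q(s, s') − (r(s, s') + V_Q(s')) = −α [log(F̃(s') P_B(s|s')) − log(F̃(s) P_F(s'|s)) − E(s → s')/α], where F̃(s) = Σ_{s'' ∈ Ch(s)} exp(Q(s, s'')/α) and P_F(s'|s) = exp(Q(s, s')/α)/F̃(s). -/
import Mathlib


/-- The flow induced by a soft Q-function:
`F(s) = Σ_{s'' ∈ Ch(s)} exp(Q(s,s'')/α)`. -/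
noncomputable def Fq {V : Type*} [Fintype V] (E : V → V → Prop) [DecidableRel E]
    (α : ℝ) (Q : V → V → ℝ) (s : V) : ℝ :=
  ∑ t ∈ Finset.univ.filter (fun t => E s t), Real.exp (Q s t / α)

/-- The policy induced by a soft Q-function:
`P_F(s'|s) = exp(Q(s,s')/α) / F(s)`. -/
noncomputable def PFq {V : Type*} [Fintype V] (E : V → V → Prop) [DecidableRel E]
    (α : ℝ) (Q : V → V → ℝ) (s s' : V) : ℝ :=
  Real.exp (Q s s' / α) / Fq E α Q s

/-- The soft value function induced by a soft Q-function:
`V_Q(s) = α log Σ_{s'' ∈ Ch(s)} exp(Q(s,s'')/α)` for `s ∈ S`, and `V_Q(s_f) = 0`. -/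
noncomputable def VQ {V : Type*} [Fintype V] [DecidableEq V]
    (E : V → V → Prop) [DecidableRel E] (sf : V) (α : ℝ) (Q : V → V → ℝ) (s : V) : ℝ :=
  if s = sf then 0 else α * Real.log (Fq E α Q s)

/-- Sum of `f` over consecutive pairs of a list. -/
def pairSum {V : Type*} (f : V → V → ℝ) (l : List V) : ℝ :=
  ((l.zip l.tail).map (fun p => f p.1 p.2)).sum

/-- `l` is a directed path from `a` to `b` in the graph with edge relation `E`. -/
def IsPath {V : Type*} (E : V → V → Prop) (a b : V) (l : List V) : Prop :=
  l.Chain' E ∧ l.head? = some a ∧ l.getLast? = some b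

/-- With the forward-looking corrected reward
`r(s,s') = -E(s → s') + α log P_B(s|s')` on edges with `s' ∈ S` and `r(s,s_f) = 0`, for
every edge `s → s'` with `s' ∈ S` the SQL residual equals `-α` times the Forward-Looking
DB residual, under `F̃(s) = Σ_{s''} exp(Q(s,s'')/α)`, `P_F(s'|s) = exp(Q(s,s')/α)/F̃(s)`. -/
theorem sql_residual_eq_fl_db_residual
    {V : Type*} [Fintype V] [DecidableEq V]
    (E : V → V → Prop) [DecidableRel E] (s0 sf : V)
    (hacyc : ∀ v : V, ¬ Relation.TransGen E v v)
    (hsink : ∀ v : V, ¬ E sf v)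
    (hreach : ∀ v : V, Relation.ReflTransGen E s0 v)
    (hchild : ∀ s : V, s ≠ sf → ∃ t : V, E s t)
    (α : ℝ) (hα : 0 < α)
    (En : V → ℝ)
    -- edge-energy function decomposing the energy along every complete trajectory
    (Ee : V → V → ℝ)
    (hEe : ∀ (x : V) (l : List V), E x sf → IsPath E s0 x l → pairSum Ee l = En x)
    (PB : V → V → ℝ)
    (hPBpos : ∀ s s' : V, E s s' → s' ≠ sf → 0 < PB s s')
    (hPBsum : ∀ s' : V, s' ≠ sf → s' ≠ s0 →
      ∑ s ∈ Finset.univ.filter (fun s => E s s'), PB s s' = 1)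
    -- forward-looking corrected reward
    (r : V → V → ℝ)
    (hr : ∀ s s' : V, E s s' → s' ≠ sf →
      r s s' = -Ee s s' + α * Real.log (PB s s'))
    (hrf : ∀ x : V, E x sf → r x sf = 0)
    (Q : V → V → ℝ) :
    ∀ s s' : V, E s s' → s' ≠ sf →
      Q s s' - (r s s' + VQ E sf α Q s')
        = -α * (Real.log (Fq E α Q s' * PB s s')
            - Real.log (Fq E α Q s * PFq E α Q s s')
            - Ee s s' / α) := by
  intro s s' hE hne
  have hFpos : ∀ u t : V, E u t → 0 < Fq E α Q u := by
    intro u t hut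
    apply Finset.sum_pos'
    · intro i _; positivity
    · exact ⟨t, Finset.mem_filter.mpr ⟨Finset.mem_univ t, hut⟩, Real.exp_pos _⟩
  have hFs : 0 < Fq E α Q s := hFpos s s' hE
  obtain ⟨t, ht⟩ := hchild s' hne
  have hFs' : 0 < Fq E α Q s' := hFpos s' t ht
  have hPB : 0 < PB s s' := hPBpos s s' hE hne
  have h1 : Fq E α Q s * PFq E α Q s s' = Real.exp (Q s s' / α) := by
    rw [PFq]; field_simp
  rw [hr s s' hE hne, VQ, if_neg hne, Real.log_mul (ne_of_gt hFs') (ne_of_gt hPB), h1,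
    Real.log_exp]
  field_simp
  ring
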